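/- Multiplicative homological perturbation lemma, projection part: the perturbed projection p' := p ∘ Σ is a unital algebra homomorphism from M to N: p'(1) = 1 and p'(ab) = p'(a)·p'(b) for all a, b in M. -/

import Mathlib

private lemma hpl_tri {A : Type*} [AddCommMonoid A] (g : ℕ → ℕ → A) (n : ℕ) :
    ∑ k ∈ Finset.range n, ∑ j ∈ Finset.range (k + 1), g j (k - j)
      = ∑ j ∈ Finset.range n, ∑ l ∈ Finset.range (n - j), g j l := by
  induction n with
  | zero => simp
  | succ n ih =>
    rw [Finset.sum_range_succ, ih]
    have h1 : ∀ j ∈ Finset.range n, ∑ l ∈ Finset.range (n + 1 - j), g j l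
        = (∑ l ∈ Finset.range (n - j), g j l) + g j (n - j) := by
      intro j hj
      have hj' : n + 1 - j = (n - j) + 1 := by
        have := Finset.mem_range.mp hj; omega
      rw [hj', Finset.sum_range_succ]
    rw [Finset.sum_range_succ (fun j => ∑ l ∈ Finset.range (n + 1 - j), g j l),
      Finset.sum_congr rfl h1, Finset.sum_add_distrib,
      Finset.sum_range_succ (fun j => g j (n - j))]
    simp [Nat.sub_self]
    abel


private lemma hpl_key
    {R : Type*} [CommRing R] {M N : Type*}
    [Ring M] [Algebra R M] [Ring N] [Algebra R N]
    (𝒜 : ℤ → Submodule R M) [GradedAlgebra 𝒜]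
    (x h : M →ₗ[R] M) (i : N →ₗ[R] M) (p : M →ₗ[R] N)
    (hpi : p ∘ₗ i = LinearMap.id)
    (hhh : h ∘ₗ h = 0) (hhi : h ∘ₗ i = 0) (hph : p ∘ₗ h = 0)
    (hxder : ∀ (n : ℤ), ∀ a ∈ 𝒜 n, ∀ b : M,
      x (a * b) = x a * b + (((-1 : ℤˣ) ^ n : ℤˣ) : ℤ) • (a * x b))
    (hpmul : ∀ a b : M, p (a * b) = p a * p b)
    (hhdeg : ∀ (n : ℤ), ∀ a ∈ 𝒜 n, h a ∈ 𝒜 (n - 1))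
    (hhder : ∀ (n : ℤ), ∀ a ∈ 𝒜 n, ∀ b : M,
      h (a * b) = h a * i (p b) + (((-1 : ℤˣ) ^ n : ℤˣ) : ℤ) • (a * h b)) :
    ∀ (k : ℕ) (a b : M), p (((x ∘ₗ h) ^ k) (a * b)) =
      ∑ j ∈ Finset.range (k + 1),
        p (((x ∘ₗ h) ^ j) a) * p (((x ∘ₗ h) ^ (k - j)) b) := by
  set e : M →ₗ[R] M := x ∘ₗ h with he
  have hh0 : ∀ v : M, h (h v) = 0 := fun v => by
    simpa using LinearMap.ext_iff.mp hhh v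
  have hph0 : ∀ v : M, p (h v) = 0 := fun v => by
    simpa using LinearMap.ext_iff.mp hph v
  have hhi0 : ∀ v : N, h (i v) = 0 := fun v => by
    simpa using LinearMap.ext_iff.mp hhi v
  have hpi0 : ∀ v : N, p (i v) = v := fun v => by
    simpa using LinearMap.ext_iff.mp hpi v
  have hLh : ∀ (j : ℕ) (v : M), p ((e ^ j) (h v)) = 0 := by
    intro j v
    cases j with
    | zero => simpa using hph0 v
    | succ j =>
      rw [pow_succ, Module.End.mul_apply]
      simp [he, LinearMap.comp_apply, hh0]
  have hLi : ∀ (j : ℕ) (v : N), (e ^ (j + 1)) (i v) = 0 := by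
    intro j v
    rw [pow_succ, Module.End.mul_apply]
    simp [he, LinearMap.comp_apply, hhi0]
  intro k
  induction k with
  | zero => intro a b; simpa using hpmul a b
  | succ k IH =>
    have Hhom : ∀ (n : ℤ) (a : M), a ∈ 𝒜 n → ∀ b : M,
        p ((e ^ (k + 1)) (a * b)) =
          ∑ j ∈ Finset.range (k + 1 + 1),
            p ((e ^ j) a) * p ((e ^ (k + 1 - j)) b) := by
      intro n a ha b
      set ε : ℤ := (((-1 : ℤˣ) ^ n : ℤˣ) : ℤ) with hε
      set ε' : ℤ := (((-1 : ℤˣ) ^ (n - 1) : ℤˣ) : ℤ) with hε'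
      have hεε : ε * ε = 1 := by
        rw [hε, ← Units.val_mul, Int.units_mul_self, Units.val_one]
      have hexp : e (a * b) = e a * i (p b) + ε' • (h a * x (i (p b)))
          + ε • (x a * h b) + a * e b := by
        have h1 : h (a * b) = h a * i (p b) + ε • (a * h b) := hhder n a ha b
        have h2 : x (h a * i (p b)) = x (h a) * i (p b) + ε' • (h a * x (i (p b))) :=
          hxder (n - 1) (h a) (hhdeg n a ha) (i (p b))
        have h3 : x (a * h b) = x a * h b + ε • (a * x (h b)) := hxder n a ha (h b)
        have : e (a * b) = x (h (a * b)) := rfl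
        rw [this, h1, map_add, h2, map_zsmul, h3, smul_add, smul_smul, hεε, one_smul]
        show e a * i (p b) + ε' • (h a * x (i (p b))) + (ε • (x a * h b) + a * e b) = _
        abel
      have step1 : p ((e ^ (k + 1)) (a * b)) = p ((e ^ k) (e (a * b))) := by
        rw [pow_succ, Module.End.mul_apply]
      rw [step1, hexp]
      simp only [map_add, map_zsmul]
      rw [IH (e a) (i (p b)), IH (h a) (x (i (p b))), IH (x a) (h b), IH a (e b)]
      have T2 : (∑ j ∈ Finset.range (k + 1),
          p ((e ^ j) (h a)) * p ((e ^ (k - j)) (x (i (p b))))) = 0 :=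
        Finset.sum_eq_zero fun j _ => by rw [hLh, zero_mul]
      have T3 : (∑ j ∈ Finset.range (k + 1),
          p ((e ^ j) (x a)) * p ((e ^ (k - j)) (h b))) = 0 :=
        Finset.sum_eq_zero fun j _ => by rw [hLh, mul_zero]
      have T1 : (∑ j ∈ Finset.range (k + 1),
          p ((e ^ j) (e a)) * p ((e ^ (k - j)) (i (p b))))
          = p ((e ^ (k + 1)) a) * p b := by
        rw [Finset.sum_eq_single_of_mem k (Finset.self_mem_range_succ k)]
        · rw [Nat.sub_self, pow_zero, Module.End.one_apply, hpi0,
            ← Module.End.mul_apply, ← pow_succ]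
        · intro j hj hjk
          have hj' : j < k + 1 := Finset.mem_range.mp hj
          obtain ⟨m, hm⟩ : ∃ m, k - j = m + 1 := ⟨k - j - 1, by omega⟩
          rw [hm, hLi, map_zero, mul_zero]
      have T4 : (∑ j ∈ Finset.range (k + 1),
          p ((e ^ j) a) * p ((e ^ (k - j)) (e b)))
          = ∑ j ∈ Finset.range (k + 1), p ((e ^ j) a) * p ((e ^ (k + 1 - j)) b) := by
        refine Finset.sum_congr rfl fun j hj => ?_
        have hj' : j < k + 1 := Finset.mem_range.mp hj
        have : (e ^ (k - j)) (e b) = (e ^ (k + 1 - j)) b := by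
          have h1 : k + 1 - j = (k - j) + 1 := by omega
          rw [h1, pow_succ, Module.End.mul_apply]
        rw [this]
      rw [T1, T2, T3, T4, smul_zero, smul_zero, add_zero, add_zero,
        Finset.sum_range_succ (fun j => p ((e ^ j) a) * p ((e ^ (k + 1 - j)) b)) (k + 1),
        Nat.sub_self, pow_zero, Module.End.one_apply, add_comm]
    intro a b
    induction a using DirectSum.Decomposition.inductionOn 𝒜 with
    | zero => simp
    | homogeneous m => exact Hhom _ m m.2 b
    | add a a' ha ha' =>
      simp only [add_mul, map_add, ha, ha', Finset.sum_add_distrib]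


theorem multiplicative_hpl_projection
    {R : Type*} [CommRing R] {M N : Type*}
    [Ring M] [Algebra R M] [Ring N] [Algebra R N]
    (𝒜 : ℤ → Submodule R M) (ℬ : ℤ → Submodule R N)
    [GradedAlgebra 𝒜] [GradedAlgebra ℬ]
    (dM : M →ₗ[R] M) (dN : N →ₗ[R] N)
    (hdM : dM ∘ₗ dM = 0) (hdN : dN ∘ₗ dN = 0)
    (i : N →ₗ[R] M) (p : M →ₗ[R] N) (h : M →ₗ[R] M)
    (hdi : dM ∘ₗ i = i ∘ₗ dN) (hpd : p ∘ₗ dM = dN ∘ₗ p)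
    (hpi : p ∘ₗ i = LinearMap.id)
    (hhtp : LinearMap.id - i ∘ₗ p = dM ∘ₗ h + h ∘ₗ dM)
    (hhh : h ∘ₗ h = 0) (hhi : h ∘ₗ i = 0) (hph : p ∘ₗ h = 0)
    (x : M →ₗ[R] M) (hx : (dM + x) ∘ₗ (dM + x) = 0)
    (K : ℕ) (hK : (x ∘ₗ h) ^ K = 0)
    -- `d_M`, `d_N` and `x` are homogeneous of degree `+1` and graded derivations
    (hdMdeg : ∀ (n : ℤ), ∀ a ∈ 𝒜 n, dM a ∈ 𝒜 (n + 1))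
    (hdMder : ∀ (n : ℤ), ∀ a ∈ 𝒜 n, ∀ b : M,
      dM (a * b) = dM a * b + (((-1 : ℤˣ) ^ n : ℤˣ) : ℤ) • (a * dM b))
    (hdNdeg : ∀ (n : ℤ), ∀ a ∈ ℬ n, dN a ∈ ℬ (n + 1))
    (hdNder : ∀ (n : ℤ), ∀ a ∈ ℬ n, ∀ b : N,
      dN (a * b) = dN a * b + (((-1 : ℤˣ) ^ n : ℤˣ) : ℤ) • (a * dN b))
    (hxdeg : ∀ (n : ℤ), ∀ a ∈ 𝒜 n, x a ∈ 𝒜 (n + 1))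
    (hxder : ∀ (n : ℤ), ∀ a ∈ 𝒜 n, ∀ b : M,
      x (a * b) = x a * b + (((-1 : ℤˣ) ^ n : ℤˣ) : ℤ) • (a * x b))
    -- `i` and `p` are degree-0 unital algebra homomorphisms
    (hione : i 1 = 1) (himul : ∀ a b : N, i (a * b) = i a * i b)
    (hideg : ∀ (n : ℤ), ∀ a ∈ ℬ n, i a ∈ 𝒜 n)
    (hpone : p 1 = 1) (hpmul : ∀ a b : M, p (a * b) = p a * p b)
    (hpdeg : ∀ (n : ℤ), ∀ a ∈ 𝒜 n, p a ∈ ℬ n)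
    -- `h` is homogeneous of degree `-1` and an `(i∘p, id)`-derivation
    (hhdeg : ∀ (n : ℤ), ∀ a ∈ 𝒜 n, h a ∈ 𝒜 (n - 1))
    (hhder : ∀ (n : ℤ), ∀ a ∈ 𝒜 n, ∀ b : M,
      h (a * b) = h a * i (p b) + (((-1 : ℤˣ) ^ n : ℤˣ) : ℤ) • (a * h b)) :
    let S : M →ₗ[R] M := ∑ k ∈ Finset.range K, (x ∘ₗ h) ^ k
    let S' : M →ₗ[R] M := ∑ k ∈ Finset.range (K + 1), (h ∘ₗ x) ^ k
    let i' : N →ₗ[R] M := S' ∘ₗ i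
    let p' : M →ₗ[R] N := p ∘ₗ S
    let h' : M →ₗ[R] M := h ∘ₗ S
    let dN' : N →ₗ[R] N := dN + p ∘ₗ S ∘ₗ x ∘ₗ i
    p' 1 = 1 ∧ ∀ a b : M, p' (a * b) = p' a * p' b := by
  intro S S' i' p' h' dN'
  set e : M →ₗ[R] M := x ∘ₗ h with he
  have hpi0 : ∀ v : N, p (i v) = v := fun v => by
    simpa using LinearMap.ext_iff.mp hpi v
  by_cases hK0 : K = 0
  · subst hK0
    have htriv : ∀ m : M, m = 0 := by
      intro m
      have := LinearMap.ext_iff.mp hK m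
      simpa using this
    have hN1 : (1 : N) = 0 := by
      have h1 := hpi0 1
      rw [htriv (i 1), map_zero] at h1
      exact h1.symm
    have hS0 : S = 0 := by simp [S]
    constructor
    · show p (S 1) = 1
      rw [hS0, LinearMap.zero_apply, map_zero]
      exact hN1.symm
    · intro a b
      show p (S (a * b)) = p (S a) * p (S b)
      rw [hS0]
      simp
  · have key := hpl_key 𝒜 x h i p hpi hhh hhi hph hxder hpmul hhdeg hhder
    have h1z : h 1 = 0 := by
      have e1 : h ((1 : M) * 1) = h 1 * i (p 1)
          + (((-1 : ℤˣ) ^ (0 : ℤ) : ℤˣ) : ℤ) • ((1 : M) * h 1) :=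
        hhder 0 1 SetLike.GradedOne.one_mem 1
      simp only [one_mul, hpone, hione, mul_one, zpow_zero, Units.val_one,
        one_smul] at e1
      exact (left_eq_add.mp e1)
    have epow1 : ∀ k : ℕ, (e ^ (k + 1)) (1 : M) = 0 := by
      intro k
      rw [pow_succ, Module.End.mul_apply]
      simp [he, LinearMap.comp_apply, h1z]
    have ezero : ∀ k : ℕ, K ≤ k → ∀ v : M, (e ^ k) v = 0 := by
      intro k hk v
      obtain ⟨m, rfl⟩ : ∃ m, k = K + m := ⟨k - K, by omega⟩
      rw [pow_add, hK, zero_mul, LinearMap.zero_apply]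
    have pzero : ∀ k : ℕ, K ≤ k → ∀ v : M, p ((e ^ k) v) = 0 := fun k hk v => by
      rw [ezero k hk, map_zero]
    have expand : ∀ v : M, p' v = ∑ k ∈ Finset.range K, p ((e ^ k) v) := by
      intro v
      show p (S v) = _
      show p ((∑ k ∈ Finset.range K, e ^ k) v) = _
      rw [LinearMap.sum_apply, map_sum]
    constructor
    · rw [expand 1]
      rw [Finset.sum_eq_single_of_mem 0
        (Finset.mem_range.mpr (Nat.pos_of_ne_zero hK0))]
      · simp [hpone]
      · intro j hj hj0
        obtain ⟨m, rfl⟩ : ∃ m, j = m + 1 := ⟨j - 1, by omega⟩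
        rw [epow1 m, map_zero]
    · intro a b
      rw [expand (a * b), expand a, expand b]
      have step2 : ∑ k ∈ Finset.range K, p ((e ^ k) (a * b))
          = ∑ k ∈ Finset.range (K + K), p ((e ^ k) (a * b)) :=
        Finset.sum_subset (Finset.range_subset_range.mpr (Nat.le_add_right K K))
          (fun k _ hk' => pzero k (by simpa using hk') _)
      rw [step2, Finset.sum_congr rfl (fun k _ => key k a b),
        hpl_tri (fun j l => p ((e ^ j) a) * p ((e ^ l) b)) (K + K),
        Finset.sum_mul_sum]
      have inner : ∀ j ∈ Finset.range (K + K),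
          ∑ l ∈ Finset.range (K + K - j), p ((e ^ j) a) * p ((e ^ l) b)
            = ∑ l ∈ Finset.range K, p ((e ^ j) a) * p ((e ^ l) b) := by
        intro j _
        by_cases hjK : j < K
        · refine (Finset.sum_subset (Finset.range_subset_range.mpr (by omega)) ?_).symm
          intro l _ hl'
          rw [pzero l (by simpa using hl'), mul_zero]
        · rw [Finset.sum_eq_zero fun l _ => by
              rw [pzero j (by omega), zero_mul],
            Finset.sum_eq_zero fun l _ => by
              rw [pzero j (by omega), zero_mul]]
      rw [Finset.sum_congr rfl inner]
      refine (Finset.sum_subset (Finset.range_subset_range.mpr (by omega)) ?_).symm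
      intro j _ hj'
      exact Finset.sum_eq_zero fun l _ => by
        rw [pzero j (by simpa using hj'), zero_mul]
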